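/- Suppose claims X_n are i.i.d. nonnegative with cdf V, there exists R > 0 with E[e^{R X₁}] = e^{Rc}, and ξ = sup_{y ≥ c} e^{Ry}V̄(y)/∫_y^∞ e^{Rz} dV(z). For the surplus process U_n = U_{n−1}(1+i) + c − X_n with constant interest i ≥ 0, the finite-time ruin probabilities satisfy Ψ_n(u) ≤ ξ e^{−Ru(1+i)} for all n ≥ 1 and u ≥ 0. -/

import Mathlib

open MeasureTheory Real ProbabilityTheory

private def lbSurp (i c : ℝ) : ℕ → ℝ → (ℕ → ℝ) → ℝ
  | 0, u, _ => u
  | k+1, u, x => lbSurp i c k u x * (1+i) + c - x k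

private def lbRuin (i c : ℝ) : (n : ℕ) → ℝ → (Fin n → ℝ) → Prop
  | 0, _, _ => False
  | n+1, u, x => u * (1+i) + c - x 0 < 0 ∨ lbRuin i c n (u * (1+i) + c - x 0) (Fin.tail x)

private lemma lbSurp_zero (i c u : ℝ) (x : ℕ → ℝ) : lbSurp i c 0 u x = u := rfl

private lemma lbSurp_succ (i c u : ℝ) (x : ℕ → ℝ) (k : ℕ) :
    lbSurp i c (k+1) u x = lbSurp i c k u x * (1+i) + c - x k := rfl

private lemma lbRuin_succ (i c u : ℝ) (n : ℕ) (x : Fin (n+1) → ℝ) :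
    lbRuin i c (n+1) u x =
      (u * (1+i) + c - x 0 < 0 ∨ lbRuin i c n (u * (1+i) + c - x 0) (Fin.tail x)) := rfl

private lemma lbSurp_shift (i c : ℝ) (u : ℝ) (x : ℕ → ℝ) :
    ∀ k, lbSurp i c k (u*(1+i)+c - x 0) (fun m => x (m+1)) = lbSurp i c (k+1) u x := by
  intro k
  induction k with
  | zero => rfl
  | succ k ih => rw [lbSurp_succ, ih]; rfl

private lemma lbRuin_iff (i c : ℝ) : ∀ (n : ℕ) (u : ℝ) (x : ℕ → ℝ),
    lbRuin i c n u (fun k : Fin n => x k) ↔ ∃ k, 1 ≤ k ∧ k ≤ n ∧ lbSurp i c k u x < 0 := by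
  intro n
  induction n with
  | zero =>
    intro u x
    constructor
    · exact fun h => h.elim
    · rintro ⟨k, h1, h2, _⟩; omega
  | succ n ih =>
    intro u x
    have htail : Fin.tail (fun k : Fin (n+1) => x ↑k) = fun k : Fin n => (fun m => x (m+1)) ↑k := by
      funext k; simp [Fin.tail]
    rw [lbRuin_succ, htail]
    simp only [Fin.val_zero]
    rw [ih (u * (1+i) + c - x 0) (fun m => x (m+1))]
    constructor
    · rintro (h | ⟨k, h1, h2, h3⟩)
      · exact ⟨1, le_refl 1, by omega, by rw [lbSurp_succ, lbSurp_zero]; exact h⟩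
      · exact ⟨k+1, by omega, by omega, by rwa [lbSurp_shift] at h3⟩
    · rintro ⟨k, h1, h2, h3⟩
      rcases k with _ | k
      · omega
      rcases k with _ | k
      · left; rw [lbSurp_succ, lbSurp_zero] at h3; exact h3
      · right; exact ⟨k+1, by omega, by omega, by rw [lbSurp_shift]; exact h3⟩

private lemma lbRuin_measurableSet (i c : ℝ) :
    ∀ n : ℕ, MeasurableSet {p : ℝ × (Fin n → ℝ) | lbRuin i c n p.1 p.2} := by
  intro n
  induction n with
  | zero =>
    have : {p : ℝ × (Fin 0 → ℝ) | lbRuin i c 0 p.1 p.2} = ∅ := by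
      ext p; simp only [Set.mem_setOf_eq, Set.mem_empty_iff_false]; exact ⟨fun h => h, False.elim⟩
    rw [this]; exact MeasurableSet.empty
  | succ n ih =>
    have h1 : Measurable fun p : ℝ × (Fin (n+1) → ℝ) => p.1 * (1+i) + c - p.2 0 :=
      ((measurable_fst.mul_const _).add_const c).sub ((measurable_pi_apply 0).comp measurable_snd)
    have h2 : Measurable fun p : ℝ × (Fin (n+1) → ℝ) =>
        ((p.1 * (1+i) + c - p.2 0, Fin.tail p.2) : ℝ × (Fin n → ℝ)) :=
      h1.prodMk (measurable_pi_iff.2 fun k => (measurable_pi_apply _).comp measurable_snd)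
    have heq : {p : ℝ × (Fin (n+1) → ℝ) | lbRuin i c (n+1) p.1 p.2}
        = {p : ℝ × (Fin (n+1) → ℝ) | p.1 * (1+i) + c - p.2 0 < 0}
          ∪ (fun p : ℝ × (Fin (n+1) → ℝ) => ((p.1*(1+i)+c - p.2 0, Fin.tail p.2) : ℝ × (Fin n → ℝ)))
            ⁻¹' {p : ℝ × (Fin n → ℝ) | lbRuin i c n p.1 p.2} := rfl
    rw [heq]
    exact (measurableSet_lt h1 measurable_const).union (ih.preimage h2)

private lemma lb_main (i c : ℝ) (hi : 0 ≤ i) (hc : 0 < c)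
    (μ : Measure ℝ) [IsProbabilityMeasure μ] (R : ℝ) (hR : 0 < R)
    (hmgf_int : Integrable (fun x => Real.exp (R * x)) μ)
    (hmgf : ∫ x, Real.exp (R * x) ∂μ = Real.exp (R * c))
    (ξ : ℝ) (hξ0 : 0 < ξ)
    (key : ∀ y, c ≤ y → Real.exp (R*y) * (μ (Set.Ioi y)).toReal
      ≤ ξ * ∫ z in Set.Ioi y, Real.exp (R*z) ∂μ) :
    ∀ n : ℕ, ∀ u : ℝ, 0 ≤ u →
      Measure.pi (fun _ : Fin n => μ) {x | lbRuin i c n u x}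
        ≤ ENNReal.ofReal (ξ * Real.exp (-R*u*(1+i))) := by
  intro n
  induction n with
  | zero =>
    intro u hu
    have h0 : {x : Fin 0 → ℝ | lbRuin i c 0 u x} = ∅ := by
      ext x; exact ⟨fun h => h, False.elim⟩
    rw [h0]
    simp
  | succ n ih =>
    intro u hu
    set ν := Measure.pi (fun _ : Fin n => μ) with hν
    set y := u * (1+i) + c with hy
    have hyc : c ≤ y := by nlinarith
    have hy0 : (0:ℝ) ≤ y := le_trans hc.le hyc
    set T : Set (ℝ × (Fin n → ℝ)) := {p | y - p.1 < 0 ∨ lbRuin i c n (y - p.1) p.2} with hT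
    have hTmeas : MeasurableSet T := by
      have h2 : Measurable fun p : ℝ × (Fin n → ℝ) => ((y - p.1, p.2) : ℝ × (Fin n → ℝ)) :=
        (measurable_const.sub measurable_fst).prodMk measurable_snd
      have heq : T = {p : ℝ × (Fin n → ℝ) | y - p.1 < 0}
          ∪ (fun p : ℝ × (Fin n → ℝ) => ((y - p.1, p.2) : ℝ × (Fin n → ℝ)))
            ⁻¹' {p : ℝ × (Fin n → ℝ) | lbRuin i c n p.1 p.2} := rfl
      rw [heq]
      exact (measurableSet_lt (measurable_const.sub measurable_fst) measurable_const).union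
        ((lbRuin_measurableSet i c n).preimage h2)
    have hmp := measurePreserving_piFinSuccAbove (fun _ : Fin (n+1) => μ) 0
    have hex : ∀ x : Fin (n+1) → ℝ,
        (MeasurableEquiv.piFinSuccAbove (fun _ : Fin (n+1) => ℝ) 0) x = (x 0, Fin.tail x) := by
      intro x
      simp only [MeasurableEquiv.piFinSuccAbove_apply, Fin.insertNthEquiv_symm_apply]
      rfl
    have hpre : {x : Fin (n+1) → ℝ | lbRuin i c (n+1) u x}
        = (⇑(MeasurableEquiv.piFinSuccAbove (fun _ : Fin (n+1) => ℝ) 0)) ⁻¹' T := by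
      ext x
      simp only [Set.mem_preimage, hex]
      exact Iff.rfl
    have hπS : Measure.pi (fun _ : Fin (n+1) => μ) {x | lbRuin i c (n+1) u x} = (μ.prod ν) T := by
      rw [hpre]
      exact hmp.measure_preimage hTmeas.nullMeasurableSet
    rw [hπS, Measure.prod_apply hTmeas]
    classical
    set g : ℝ → ENNReal := fun a =>
      if y < a then 1 else ENNReal.ofReal (ξ * Real.exp (-R*(y-a)*(1+i))) with hg
    have hsec : ∀ a : ℝ, ν (Prod.mk a ⁻¹' T) ≤ g a := by
      intro a
      by_cases hay : y < a
      · rw [hg]; simp only [if_pos hay]; exact prob_le_one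
      · rw [hg]; simp only [if_neg hay]
        push_neg at hay
        have hsub : Prod.mk a ⁻¹' T ⊆ {x : Fin n → ℝ | lbRuin i c n (y - a) x} := by
          intro x hx
          rcases hx with h | h
          · exact absurd h (by simp only [not_lt]; linarith)
          · exact h
        exact le_trans (measure_mono hsub) (ih (y - a) (by linarith))
    have hIicInt : Integrable (fun a => (ξ * Real.exp (-(R*y))) * Real.exp (R*a))
        (μ.restrict (Set.Iic y)) := hmgf_int.restrict.const_mul _
    calc ∫⁻ a, ν (Prod.mk a ⁻¹' T) ∂μ ≤ ∫⁻ a, g a ∂μ := lintegral_mono hsec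
      _ = ∫⁻ a in Set.Iic y, g a ∂μ + ∫⁻ a in (Set.Iic y)ᶜ, g a ∂μ := by
          rw [← lintegral_add_measure, Measure.restrict_add_restrict_compl measurableSet_Iic]
      _ ≤ ENNReal.ofReal (ξ * Real.exp (-(R*y)) * ∫ a in Set.Iic y, Real.exp (R*a) ∂μ)
            + ENNReal.ofReal (ξ * Real.exp (-(R*y)) * ∫ a in Set.Ioi y, Real.exp (R*a) ∂μ) := by
          gcongr
          · have h1 : ∫⁻ a in Set.Iic y, g a ∂μ
                ≤ ∫⁻ a in Set.Iic y, ENNReal.ofReal ((ξ * Real.exp (-(R*y))) * Real.exp (R*a)) ∂μ := by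
              refine setLIntegral_mono (by fun_prop) ?_
              intro a ha
              rw [hg]
              simp only [if_neg (not_lt.2 (Set.mem_Iic.1 ha))]
              refine ENNReal.ofReal_le_ofReal ?_
              have h2 : -R*(y-a)*(1+i) ≤ -(R*y) + R*a := by
                nlinarith [mul_nonneg (mul_nonneg hR.le (sub_nonneg.2 (Set.mem_Iic.1 ha))) hi]
              calc ξ * Real.exp (-R*(y-a)*(1+i)) ≤ ξ * Real.exp (-(R*y) + R*a) :=
                    mul_le_mul_of_nonneg_left (Real.exp_le_exp.2 h2) hξ0.le
                _ = ξ * Real.exp (-(R*y)) * Real.exp (R*a) := by rw [Real.exp_add]; ring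
            refine h1.trans (le_of_eq ?_)
            rw [← ofReal_integral_eq_lintegral_ofReal hIicInt
              (Filter.Eventually.of_forall fun a => by positivity)]
            rw [← integral_const_mul]
          · have h1 : ∫⁻ a in (Set.Iic y)ᶜ, g a ∂μ ≤ ∫⁻ a in (Set.Iic y)ᶜ, 1 ∂μ := by
              refine setLIntegral_mono measurable_const ?_
              intro a ha
              rw [Set.compl_Iic] at ha
              rw [hg]
              simp only [if_pos (Set.mem_Ioi.1 ha)]
              exact le_refl 1
            refine h1.trans ?_
            rw [setLIntegral_one, Set.compl_Iic]
            have h3 : μ (Set.Ioi y) = ENNReal.ofReal ((μ (Set.Ioi y)).toReal) :=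
              (ENNReal.ofReal_toReal (measure_ne_top μ _)).symm
            rw [h3]
            refine ENNReal.ofReal_le_ofReal ?_
            have h4 := key y hyc
            have h5 : Real.exp (-(R*y)) * (Real.exp (R*y) * (μ (Set.Ioi y)).toReal)
                ≤ Real.exp (-(R*y)) * (ξ * ∫ z in Set.Ioi y, Real.exp (R*z) ∂μ) :=
              mul_le_mul_of_nonneg_left h4 (Real.exp_pos _).le
            calc (μ (Set.Ioi y)).toReal
                = Real.exp (-(R*y)) * (Real.exp (R*y) * (μ (Set.Ioi y)).toReal) := by
                  rw [← mul_assoc, ← Real.exp_add]; simp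
              _ ≤ Real.exp (-(R*y)) * (ξ * ∫ z in Set.Ioi y, Real.exp (R*z) ∂μ) := h5
              _ = ξ * Real.exp (-(R*y)) * ∫ z in Set.Ioi y, Real.exp (R*z) ∂μ := by ring
      _ = ENNReal.ofReal (ξ * Real.exp (-(R*y)) *
            ((∫ a in Set.Iic y, Real.exp (R*a) ∂μ) + ∫ a in Set.Ioi y, Real.exp (R*a) ∂μ)) := by
          rw [← ENNReal.ofReal_add]
          · congr 1; ring
          · have h6 : (0:ℝ) ≤ ∫ a in Set.Iic y, Real.exp (R*a) ∂μ :=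
              integral_nonneg fun a => (Real.exp_pos _).le
            positivity
          · have h7 : (0:ℝ) ≤ ∫ a in Set.Ioi y, Real.exp (R*a) ∂μ :=
              integral_nonneg fun a => (Real.exp_pos _).le
            positivity
      _ = ENNReal.ofReal (ξ * Real.exp (-R*u*(1+i))) := by
          have hsum : (∫ a in Set.Iic y, Real.exp (R*a) ∂μ) + ∫ a in Set.Ioi y, Real.exp (R*a) ∂μ
              = Real.exp (R*c) := by
            rw [← Set.compl_Iic, integral_add_compl measurableSet_Iic hmgf_int, hmgf]
          rw [hsum]
          congr 1
          rw [mul_assoc, ← Real.exp_add]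
          congr 2
          rw [hy]; ring

/-- Lundberg upper bound for the finite-time ruin probabilities of the surplus process
`U_n = U_{n-1}(1+i) + c - X_n` with i.i.d. nonnegative claims of distribution `μ`,
adjustment coefficient `R` with `E[e^{RX₁}] = e^{Rc}` and
`ξ = sup_{y ≥ c} e^{Ry} V̄(y) / ∫_y^∞ e^{Rz} dV(z)`:
`Ψ_n(u) ≤ ξ e^{-Ru(1+i)}` for all `n ≥ 1` and `u ≥ 0`. -/
theorem lundberg_bound_finite_time
    {Ω : Type*} [MeasureSpace Ω] [IsProbabilityMeasure (ℙ : Measure Ω)]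
    (i c : ℝ) (hi : 0 ≤ i) (hc : 0 < c)
    (X : ℕ → Ω → ℝ) (hXmeas : ∀ n, Measurable (X n))
    (hXpos : ∀ n, 1 ≤ n → ∀ ω, 0 ≤ X n ω)
    (μ : Measure ℝ) [IsProbabilityMeasure μ]
    (hiid : ∀ n, 1 ≤ n → Measure.map (X n) ℙ = μ)
    (hindep : iIndepFun X ℙ)
    (hmean : ∫ x, x ∂μ < c)
    (R : ℝ) (hR : 0 < R)
    (hmgf_int : Integrable (fun x => Real.exp (R * x)) μ)
    (hmgf : ∫ x, Real.exp (R * x) ∂μ = Real.exp (R * c))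
    (ξ : ℝ) (hξ0 : 0 < ξ) (hξ1 : ξ ≤ 1)
    (hξ : IsLUB {r : ℝ | ∃ y : ℝ, c ≤ y ∧
      r = Real.exp (R * y) * (μ (Set.Ioi y)).toReal /
        ∫ z in Set.Ioi y, Real.exp (R * z) ∂μ} ξ)
    (U : ℝ → ℕ → Ω → ℝ)
    (hU0 : ∀ u ω, U u 0 ω = u)
    (hUrec : ∀ u n ω, U u (n + 1) ω = U u n ω * (1 + i) + c - X (n + 1) ω)
    (Ψ : ℕ → ℝ → ℝ)
    (hΨ : ∀ n u, Ψ n u = (ℙ {ω | ∃ k, 1 ≤ k ∧ k ≤ n ∧ U u k ω < 0}).toReal) :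
    ∀ n : ℕ, 1 ≤ n → ∀ u : ℝ, 0 ≤ u →
      Ψ n u ≤ ξ * Real.exp (-R * u * (1 + i)) := by
  have hIoiInt : ∀ y : ℝ, IntegrableOn (fun x => Real.exp (R*x)) (Set.Ioi y) μ :=
    fun y => hmgf_int.integrableOn
  -- the key consequence of the definition of ξ
  have key : ∀ y, c ≤ y → Real.exp (R*y) * (μ (Set.Ioi y)).toReal
      ≤ ξ * ∫ z in Set.Ioi y, Real.exp (R*z) ∂μ := by
    intro y hy
    set I := ∫ z in Set.Ioi y, Real.exp (R*z) ∂μ with hI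
    have hconst : ∫ _ in Set.Ioi y, Real.exp (R*y) ∂μ
        = (μ (Set.Ioi y)).toReal * Real.exp (R*y) := by
      rw [setIntegral_const]; simp [smul_eq_mul]; rfl
    have hlower : Real.exp (R*y) * (μ (Set.Ioi y)).toReal ≤ I := by
      have hmono := setIntegral_mono_on
        (integrableOn_const (measure_ne_top μ _))
        (hIoiInt y) measurableSet_Ioi
        (fun x hx => Real.exp_le_exp.2 (mul_le_mul_of_nonneg_left (le_of_lt hx) hR.le))
      rw [hconst] at hmono
      linarith [hmono]
    have hInn : (0:ℝ) ≤ I := setIntegral_nonneg measurableSet_Ioi fun x _ => (Real.exp_pos _).le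
    rcases eq_or_lt_of_le hInn with h0 | hpos
    · rw [← h0, mul_zero]
      rw [← h0] at hlower
      exact hlower
    · have hmem : Real.exp (R * y) * (μ (Set.Ioi y)).toReal / I ∈
          {r : ℝ | ∃ y' : ℝ, c ≤ y' ∧ r = Real.exp (R * y') * (μ (Set.Ioi y')).toReal /
            ∫ z in Set.Ioi y', Real.exp (R * z) ∂μ} := ⟨y, hy, rfl⟩
      have hle := hξ.1 hmem
      have hmul := mul_le_mul_of_nonneg_right hle hInn
      rwa [div_mul_cancel₀ _ hpos.ne'] at hmul
  have hU_eq : ∀ (u : ℝ) (ω : Ω) (k : ℕ), U u k ω = lbSurp i c k u (fun j => X (j+1) ω) := by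
    intro u ω k
    induction k with
    | zero => rw [hU0]; rfl
    | succ k ih => rw [hUrec, ih]; rfl
  intro n hn u hu
  rw [hΨ]
  have hSmeas : MeasurableSet {x : Fin n → ℝ | lbRuin i c n u x} := by
    have heq : {x : Fin n → ℝ | lbRuin i c n u x}
        = (fun x : Fin n → ℝ => ((u, x) : ℝ × (Fin n → ℝ)))
          ⁻¹' {p : ℝ × (Fin n → ℝ) | lbRuin i c n p.1 p.2} := rfl
    rw [heq]
    exact (lbRuin_measurableSet i c n).preimage measurable_prodMk_left
  have hTm : Measurable (fun ω : Ω => (fun k : Fin n => X ((k:ℕ)+1) ω)) :=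
    measurable_pi_iff.2 fun k => hXmeas _
  have hEvent : {ω | ∃ k, 1 ≤ k ∧ k ≤ n ∧ U u k ω < 0}
      = (fun ω : Ω => (fun k : Fin n => X ((k:ℕ)+1) ω)) ⁻¹' {x | lbRuin i c n u x} := by
    ext ω
    simp only [Set.mem_setOf_eq, Set.mem_preimage]
    have hiff := lbRuin_iff i c n u (fun j => X (j+1) ω)
    constructor
    · rintro ⟨k, h1, h2, h3⟩
      rw [hU_eq u ω k] at h3
      exact hiff.2 ⟨k, h1, h2, h3⟩
    · intro h
      obtain ⟨k, h1, h2, h3⟩ := hiff.1 h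
      refine ⟨k, h1, h2, ?_⟩
      rw [hU_eq u ω k]
      exact h3
  classical
  have hlaw : Measure.map (fun ω : Ω => (fun k : Fin n => X ((k:ℕ)+1) ω)) ℙ
      = Measure.pi (fun _ : Fin n => μ) := by
    refine (Measure.pi_eq fun s hs => ?_).symm
    rw [Measure.map_apply hTm (MeasurableSet.univ_pi hs)]
    have hpre2 : (fun ω : Ω => (fun k : Fin n => X ((k:ℕ)+1) ω)) ⁻¹' Set.univ.pi s
        = ⋂ k : Fin n, X ((k:ℕ)+1) ⁻¹' s k := by
      ext ω
      simp [Set.mem_univ_pi]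
    rw [hpre2]
    set E : Fin n ↪ ℕ := ⟨fun k => (k:ℕ)+1, fun a b h => Fin.val_injective (by simpa using h)⟩ with hE
    set sets : ℕ → Set Ω := fun m =>
      if h : 1 ≤ m ∧ m ≤ n then X m ⁻¹' s ⟨m-1, by omega⟩ else Set.univ with hsets
    have hsets_mem : ∀ k : Fin n, sets ((k:ℕ)+1) = X ((k:ℕ)+1) ⁻¹' s k := by
      intro k
      simp only [hsets]
      have hk : 1 ≤ (k:ℕ)+1 ∧ (k:ℕ)+1 ≤ n := ⟨by omega, by omega⟩
      rw [dif_pos hk]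
      congr 1
    have hEk : ∀ k : Fin n, E k = (k:ℕ)+1 := fun k => rfl
    have hInter : (⋂ k : Fin n, X ((k:ℕ)+1) ⁻¹' s k) = ⋂ m ∈ Finset.map E Finset.univ, sets m := by
      ext ω
      simp only [Set.mem_iInter, Finset.mem_map, Finset.mem_univ, true_and]
      constructor
      · intro h m hm
        obtain ⟨k, _, rfl⟩ := hm
        rw [hEk, hsets_mem k]
        exact h k
      · intro h k
        have hmem := h ((k:ℕ)+1) ⟨k, rfl⟩
        rwa [hsets_mem k] at hmem
    rw [hInter]
    have hbi := hindep.meas_biInter (S := Finset.map E Finset.univ) (s := sets) ?_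
    · rw [hbi, Finset.prod_map]
      refine Finset.prod_congr rfl fun k _ => ?_
      rw [hEk, hsets_mem k, ← Measure.map_apply (hXmeas _) (hs k), hiid ((k:ℕ)+1) (by omega)]
    · intro m hm
      obtain ⟨k, _, rfl⟩ := Finset.mem_map.1 hm
      exact ⟨s k, hs k, (hsets_mem k).symm⟩
  rw [hEvent, ← Measure.map_apply hTm hSmeas, hlaw]
  have hmain := lb_main i c hi hc μ R hR hmgf_int hmgf ξ hξ0 key n u hu
  have hrhs : (0:ℝ) ≤ ξ * Real.exp (-R*u*(1+i)) := by positivity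
  exact ENNReal.toReal_le_of_le_ofReal hrhs hmain
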